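/- Let S be a countable E-unitary inverse semigroup with E = E(S). Let Ω = {(s, φ) ∈ S × Ê : φ(s*·s) = true}, topologized as a subspace of S × Ê where S is discrete, and let ~ be the relation on Ω given by (s, φ) ~ (t, ψ) iff φ = ψ and there exists u ∈ S with u ≤ s, u ≤ t and φ(u*·u) = true; give the quotient Ω/~ the quotient topology (this is the underlying topological space of Paterson's universal groupoid of S). Let S/σ denote the quotient of S by the relation σ(s) = σ(t), given the discrete topology. Then the map from Ω/~ to (S/σ) × Ê sending the class of (s, φ) to ([s]_σ, φ) is well defined and is a homeomorphism onto its image {([s]_σ, φ) : (s, φ) ∈ Ω} with the subspace topology of the product; in particular, the universal groupoid of S is homeomorphic to the partial transformation groupoid G ⋉ Ê of the maximal group image G = S/σ acting partially on Ê. -/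

import Mathlib

class InverseSemigroup (S : Type*) extends Semigroup S, StarMul S where
  mul_star_mul_self : ∀ s : S, s * star s * s = s
  star_mul_star_self : ∀ s : S, star s * s * star s = star s
  idem_comm : ∀ e f : S, e * e = e → f * f = f → e * f = f * e

namespace InverseSemigroup

variable {S : Type*} [InverseSemigroup S]

lemma idem_star_mul (s : S) : (star s * s) * (star s * s) = star s * s := by
  calc (star s * s) * (star s * s) = star s * (s * star s * s) := by
        simp only [mul_assoc]
    _ = star s * s := by rw [mul_star_mul_self]

lemma mul_star_idem (s : S) : (s * star s) * (s * star s) = s * star s := by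
  calc (s * star s) * (s * star s) = s * (star s * s * star s) := by
        simp only [mul_assoc]
    _ = s * star s := by rw [star_mul_star_self]

lemma idem_mul {e f : S} (he : e * e = e) (hf : f * f = f) :
    (e * f) * (e * f) = e * f := by
  have hc : f * e = e * f := idem_comm f e hf he
  calc (e * f) * (e * f) = e * (f * e) * f := by simp only [mul_assoc]
    _ = e * (e * f) * f := by rw [hc]
    _ = (e * e) * (f * f) := by simp only [mul_assoc]
    _ = e * f := by rw [he, hf]

lemma idem_conj {e : S} (he : e * e = e) (s : S) :
    (star s * e * s) * (star s * e * s) = star s * e * s := by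
  have hf : (s * star s) * (s * star s) = s * star s := mul_star_idem s
  have hc : e * (s * star s) = (s * star s) * e := idem_comm e _ he hf
  calc (star s * e * s) * (star s * e * s)
      = star s * (e * (s * star s)) * (e * s) := by simp only [mul_assoc]
    _ = star s * ((s * star s) * e) * (e * s) := by rw [hc]
    _ = star s * (s * star s) * (e * e) * s := by simp only [mul_assoc]
    _ = star s * (s * star s) * e * s := by rw [he]
    _ = (star s * s * star s) * e * s := by simp only [mul_assoc]
    _ = star s * e * s := by rw [star_mul_star_self]

lemma conj_mul {e f : S} (_he : e * e = e) (hf : f * f = f) (s : S) :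
    (star s * e * s) * (star s * f * s) = star s * (e * f) * s := by
  have hss : (s * star s) * (s * star s) = s * star s := mul_star_idem s
  have hc : (s * star s) * f = f * (s * star s) := idem_comm _ _ hss hf
  calc (star s * e * s) * (star s * f * s)
      = star s * e * ((s * star s) * f) * s := by simp only [mul_assoc]
    _ = star s * e * (f * (s * star s)) * s := by rw [hc]
    _ = star s * (e * f) * (s * star s * s) := by simp only [mul_assoc]
    _ = star s * (e * f) * s := by rw [mul_star_mul_self]

lemma conj_ss (s : S) : star s * (s * star s) * s = star s * s := by
  calc star s * (s * star s) * s = (star s * s * star s) * s := by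
        simp only [mul_assoc]
    _ = star s * s := by rw [star_mul_star_self]

end InverseSemigroup

open InverseSemigroup

/-- The natural partial order on an inverse semigroup: `s ≤ t` iff `s = t·s*·s`. -/
def nle {S : Type*} [InverseSemigroup S] (s t : S) : Prop := s = t * (star s * s)

/-- `σ(s) = σ(t)` iff `s·e = t·e` for some idempotent `e`. -/
def sigmaEq {S : Type*} [InverseSemigroup S] (s t : S) : Prop :=
  ∃ e : S, e * e = e ∧ s * e = t * e

/-- `S` is E-unitary if every element above a nonzero idempotent is idempotent. -/
def EUnitary (S : Type*) [InverseSemigroup S] : Prop :=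
  ∀ e s : S, e * e = e → nle e s → s * s = s

/-- The semilattice of idempotents of an inverse semigroup. -/
def Idem (S : Type*) [InverseSemigroup S] : Type _ := {e : S // e * e = e}

instance {S : Type*} [InverseSemigroup S] : Mul (Idem S) :=
  ⟨fun e f => ⟨e.1 * f.1, idem_mul e.2 f.2⟩⟩

/-- A semi-character of a semilattice. -/
structure SemiChar (E : Type*) [Mul E] where
  toFun : E → Bool
  map_mul' : ∀ e f : E, toFun (e * f) = (toFun e && toFun f)
  exists_true : ∃ e : E, toFun e = true

/-- The space `Ê` of semi-characters, with the subspace topology from `Bool^E`. -/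
instance {E : Type*} [Mul E] : TopologicalSpace (SemiChar E) :=
  TopologicalSpace.induced (fun χ => χ.toFun) Pi.topologicalSpace

/-- For `e` idempotent, `s*·e·s` is idempotent. -/
def conjIdem {S : Type*} [InverseSemigroup S] (s : S) (e : Idem S) : Idem S :=
  ⟨star s * e.1 * s, idem_conj e.2 s⟩

/-- The semi-character `s·χ` defined by `(s·χ)(e) = χ(s*·e·s)`. -/
def sDot {S : Type*} [InverseSemigroup S] (s : S) (χ : SemiChar (Idem S))
    (h : χ.toFun ⟨star s * s, idem_star_mul s⟩ = true) : SemiChar (Idem S) where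
  toFun e := χ.toFun (conjIdem s e)
  map_mul' e f := by
    have heq : conjIdem s (e * f) = conjIdem s e * conjIdem s f :=
      Subtype.ext (conj_mul e.2 f.2 s).symm
    simp only [heq, χ.map_mul']
  exists_true := ⟨⟨s * star s, mul_star_idem s⟩, by
    have heq : conjIdem s ⟨s * star s, mul_star_idem s⟩
        = (⟨star s * s, idem_star_mul s⟩ : Idem S) := Subtype.ext (conj_ss s)
    simp only [heq]; exact h⟩

/-- The space `Ω = {(s, φ) : φ(s*·s) = true}`, where `S` carries the discrete topology. -/
def Omega (S : Type*) [InverseSemigroup S] : Type _ :=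
  {p : S × SemiChar (Idem S) // p.2.toFun ⟨star p.1 * p.1, idem_star_mul p.1⟩ = true}

instance OmegaTop (S : Type*) [InverseSemigroup S] : TopologicalSpace (Omega S) :=
  letI : TopologicalSpace S := ⊥
  inferInstanceAs (TopologicalSpace
    {p : S × SemiChar (Idem S) // p.2.toFun ⟨star p.1 * p.1, idem_star_mul p.1⟩ = true})

/-- The germ relation: `(s, φ) ~ (t, ψ)` iff `φ = ψ` and there is `u ≤ s, t` with
`φ(u*·u) = true`. -/
def germRel {S : Type*} [InverseSemigroup S] (p q : Omega S) : Prop :=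
  p.1.2 = q.1.2 ∧ ∃ u : S, nle u p.1.1 ∧ nle u q.1.1 ∧
    p.1.2.toFun ⟨star u * u, idem_star_mul u⟩ = true

/-- The quotient `Ω/~` (the underlying space of Paterson's universal groupoid),
with the quotient topology. -/
def UnivSpace (S : Type*) [InverseSemigroup S] : Type _ := Quot (germRel (S := S))

instance (S : Type*) [InverseSemigroup S] : TopologicalSpace (UnivSpace S) :=
  inferInstanceAs (TopologicalSpace (Quot (germRel (S := S))))

/-- The class of `(s, φ)` in `Ω/~`. -/
def germMk {S : Type*} [InverseSemigroup S] (p : Omega S) : UnivSpace S :=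
  Quot.mk (germRel (S := S)) p

/-- The maximal group image `S/σ`, with the discrete topology. -/
def SigmaQuot (S : Type*) [InverseSemigroup S] : Type _ := Quot (sigmaEq (S := S))

instance (S : Type*) [InverseSemigroup S] : TopologicalSpace (SigmaQuot S) := ⊥

/-- The class `[s]_σ` of `s` in `S/σ`. -/
def sigmaMk {S : Type*} [InverseSemigroup S] (s : S) : SigmaQuot S :=
  Quot.mk (sigmaEq (S := S)) s

section Aux

variable {S : Type*} [InverseSemigroup S]

lemma inv_unique' {a b c : S} (hab : a * b * a = a) (hba : b * a * b = b)
    (hac : a * c * a = a) (hca : c * a * c = c) : b = c := by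
  have iba : (b * a) * (b * a) = b * a := by
    calc (b * a) * (b * a) = (b * a * b) * a := by simp only [mul_assoc]
      _ = b * a := by rw [hba]
  have ica : (c * a) * (c * a) = c * a := by
    calc (c * a) * (c * a) = (c * a * c) * a := by simp only [mul_assoc]
      _ = c * a := by rw [hca]
  have iab : (a * b) * (a * b) = a * b := by
    calc (a * b) * (a * b) = (a * b * a) * b := by simp only [mul_assoc]
      _ = a * b := by rw [hab]
  have iac : (a * c) * (a * c) = a * c := by
    calc (a * c) * (a * c) = (a * c * a) * c := by simp only [mul_assoc]
      _ = a * c := by rw [hac]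
  have hb : b = c * a * b := by
    calc b = b * a * b := hba.symm
      _ = b * (a * c * a) * b := by rw [hac]
      _ = ((b * a) * (c * a)) * b := by simp only [mul_assoc]
      _ = ((c * a) * (b * a)) * b := by rw [idem_comm _ _ iba ica]
      _ = (c * a) * (b * a * b) := by simp only [mul_assoc]
      _ = c * a * b := by rw [hba]
  have hc : c = c * a * b := by
    calc c = c * a * c := hca.symm
      _ = c * (a * b * a) * c := by rw [hab]
      _ = c * ((a * b) * (a * c)) := by simp only [mul_assoc]
      _ = c * ((a * c) * (a * b)) := by rw [idem_comm _ _ iab iac]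
      _ = (c * a * c) * (a * b) := by simp only [mul_assoc]
      _ = c * (a * b) := by rw [hca]
      _ = c * a * b := by rw [mul_assoc]
  rw [hb, ← hc]

lemma idem_star' {e : S} (he : e * e = e) : star e = e := by
  have h1 : e * e * e = e := by rw [he, he]
  exact inv_unique' (mul_star_mul_self e) (star_mul_star_self e) h1 h1

lemma mss (s : S) : s * (star s * s) = s := by
  rw [← mul_assoc, mul_star_mul_self]

lemma sigmaEq_equiv : Equivalence (sigmaEq (S := S)) := by
  constructor
  · intro s; exact ⟨star s * s, idem_star_mul s, rfl⟩
  · rintro s t ⟨e, he, h⟩; exact ⟨e, he, h.symm⟩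
  · rintro s t r ⟨e, he, h1⟩ ⟨f, hf, h2⟩
    refine ⟨e * f, idem_mul he hf, ?_⟩
    calc s * (e * f) = (s * e) * f := (mul_assoc _ _ _).symm
      _ = (t * e) * f := by rw [h1]
      _ = t * (e * f) := mul_assoc _ _ _
      _ = t * (f * e) := by rw [idem_comm e f he hf]
      _ = (t * f) * e := (mul_assoc _ _ _).symm
      _ = (r * f) * e := by rw [h2]
      _ = r * (f * e) := mul_assoc _ _ _
      _ = r * (e * f) := by rw [idem_comm e f he hf]

lemma sigmaEq_of_mk_eq {s t : S} (h : sigmaMk s = sigmaMk t) : sigmaEq s t :=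
  (sigmaEq_equiv.eqvGen_iff).mp (Quot.eqvGen_exact h)

lemma exists_meet (hE : EUnitary S) {s t e : S} (he : e * e = e) (hst : s * e = t * e) :
    ∃ u : S, nle u s ∧ nle u t ∧ star u * u = (star s * s) * (star t * t) := by
  have hse : star e = e := idem_star' he
  -- Step (b): w := s * t* is idempotent
  have f_idem : (t * e * star t) * (t * e * star t) = t * e * star t := by
    have := idem_conj he (star t)
    rwa [star_star] at this
  have hwf : (s * star t) * (t * e * star t) = t * e * star t := by
    calc (s * star t) * (t * e * star t)
        = (s * ((star t * t) * e)) * star t := by simp only [mul_assoc]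
      _ = (s * (e * (star t * t))) * star t := by rw [idem_comm _ _ (idem_star_mul t) he]
      _ = (s * e) * ((star t * t) * star t) := by simp only [mul_assoc]
      _ = (s * e) * star t := by rw [star_mul_star_self]
      _ = (t * e) * star t := by rw [hst]
  have fnle : nle (t * e * star t) (s * star t) := by
    show t * e * star t = (s * star t) * (star (t * e * star t) * (t * e * star t))
    rw [idem_star' f_idem, f_idem, hwf]
  have hww : (s * star t) * (s * star t) = s * star t := hE _ _ f_idem fnle
  have hts : t * star s = s * star t := by
    calc t * star s = star (s * star t) := by rw [star_mul, star_star]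
      _ = s * star t := idem_star' hww
  have h2 : star (s * (star t * t)) = (star t * t) * star s := by
    rw [star_mul, star_mul, star_star]
  have h3 : star (s * (star t * t)) * (s * (star t * t))
      = (star s * s) * (star t * t) := by
    rw [h2]
    calc ((star t * t) * star s) * (s * (star t * t))
        = (star t * t) * ((star s * s) * (star t * t)) := by simp only [mul_assoc]
      _ = ((star s * s) * (star t * t)) * (star t * t) :=
          idem_comm _ _ (idem_star_mul t) (idem_mul (idem_star_mul s) (idem_star_mul t))
      _ = (star s * s) * ((star t * t) * (star t * t)) := by simp only [mul_assoc]
      _ = (star s * s) * (star t * t) := by rw [idem_star_mul t]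
  refine ⟨s * (star t * t), ?_, ?_, h3⟩
  · show s * (star t * t) = s * (star (s * (star t * t)) * (s * (star t * t)))
    rw [h3]
    calc s * (star t * t) = (s * (star s * s)) * (star t * t) := by rw [mss]
      _ = s * ((star s * s) * (star t * t)) := mul_assoc _ _ _
  · show s * (star t * t) = t * (star (s * (star t * t)) * (s * (star t * t)))
    rw [h3]
    calc s * (star t * t) = ((s * star t) * (s * star t)) * t := by
          rw [hww]; simp only [mul_assoc]
      _ = ((s * star t) * s) * (star t * t) := by simp only [mul_assoc]
      _ = ((t * star s) * s) * (star t * t) := by rw [hts]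
      _ = t * ((star s * s) * (star t * t)) := by simp only [mul_assoc]

lemma germRel_of (hE : EUnitary S) {p q : Omega S} (h1 : sigmaEq p.1.1 q.1.1)
    (h2 : p.1.2 = q.1.2) : germRel p q := by
  obtain ⟨e, he, hst⟩ := h1
  obtain ⟨u, hus, hut, huu⟩ := exists_meet hE he hst
  refine ⟨h2, u, hus, hut, ?_⟩
  have key : ∀ a b : Idem S, star u * u = a.1 * b.1 →
      p.1.2.toFun ⟨star u * u, idem_star_mul u⟩ = (p.1.2.toFun a && p.1.2.toFun b) := by
    intro a b h
    have hab : (⟨star u * u, idem_star_mul u⟩ : Idem S) = a * b := Subtype.ext h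
    rw [hab, p.1.2.map_mul']
  rw [key ⟨star p.1.1 * p.1.1, idem_star_mul p.1.1⟩
    ⟨star q.1.1 * q.1.1, idem_star_mul q.1.1⟩ huu, p.2]
  conv_lhs => rw [h2]
  rw [q.2]
  rfl

lemma isOpen_toFun_true (e : Idem S) :
    IsOpen {χ : SemiChar (Idem S) | χ.toFun e = true} := by
  have h : {χ : SemiChar (Idem S) | χ.toFun e = true}
      = (fun χ : SemiChar (Idem S) => χ.toFun) ⁻¹' ((fun g : Idem S → Bool => g e) ⁻¹' {true}) :=
    rfl
  rw [h]
  exact isOpen_induced ((isOpen_discrete ({true} : Set Bool)).preimage (continuous_apply e))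

instance : DiscreteTopology (SigmaQuot S) := ⟨rfl⟩

end Aux

theorem stmt4 {S : Type*} [InverseSemigroup S] [Countable S] (hE : EUnitary S) :
    (∀ p q : Omega S, germRel p q →
      ((sigmaMk p.1.1, p.1.2) : SigmaQuot S × SemiChar (Idem S)) = (sigmaMk q.1.1, q.1.2)) ∧
    ∃ G : UnivSpace S → SigmaQuot S × SemiChar (Idem S),
      (∀ p : Omega S, G (germMk p) = (sigmaMk p.1.1, p.1.2)) ∧
      Topology.IsEmbedding G := by
  letI : TopologicalSpace S := ⊥
  haveI : DiscreteTopology S := ⟨rfl⟩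
  have part1 : ∀ p q : Omega S, germRel p q →
      ((sigmaMk p.1.1, p.1.2) : SigmaQuot S × SemiChar (Idem S)) = (sigmaMk q.1.1, q.1.2) := by
    rintro p q ⟨hφ, u, hus, hut, -⟩
    have hus' : u = p.1.1 * (star u * u) := hus
    have hut' : u = q.1.1 * (star u * u) := hut
    have hs : sigmaEq p.1.1 q.1.1 := ⟨star u * u, idem_star_mul u, hus'.symm.trans hut'⟩
    rw [Prod.mk.injEq]
    exact ⟨Quot.sound hs, hφ⟩
  have hFc : Continuous (fun p : Omega S =>
      ((sigmaMk p.1.1, p.1.2) : SigmaQuot S × SemiChar (Idem S))) := by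
    apply Continuous.prodMk
    · exact continuous_bot.comp (continuous_fst.comp continuous_subtype_val)
    · exact continuous_snd.comp continuous_subtype_val
  have hGc : Continuous (Quot.lift (fun p : Omega S =>
      ((sigmaMk p.1.1, p.1.2) : SigmaQuot S × SemiChar (Idem S))) part1) :=
    continuous_quot_lift part1 hFc
  have hGinj : Function.Injective (Quot.lift (fun p : Omega S =>
      ((sigmaMk p.1.1, p.1.2) : SigmaQuot S × SemiChar (Idem S))) part1) := by
    intro x y h
    obtain ⟨p, rfl⟩ := Quot.exists_rep x
    obtain ⟨q, rfl⟩ := Quot.exists_rep y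
    have h' : ((sigmaMk p.1.1, p.1.2) : SigmaQuot S × SemiChar (Idem S))
        = (sigmaMk q.1.1, q.1.2) := h
    have h1 := congrArg Prod.fst h'
    have h2 := congrArg Prod.snd h'
    exact Quot.sound (germRel_of hE (sigmaEq_of_mk_eq h1) h2)
  refine ⟨part1, Quot.lift (fun p : Omega S =>
      ((sigmaMk p.1.1, p.1.2) : SigmaQuot S × SemiChar (Idem S))) part1,
      fun p => rfl, ⟨?_⟩, hGinj⟩
  refine le_antisymm (continuous_iff_le_induced.mp hGc) ?_
  rw [TopologicalSpace.le_def]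
  intro U hU
  refine isOpen_induced_iff.mpr ?_
  refine ⟨⋃ (s : S) (A : Set (SemiChar (Idem S)))
      (_ : IsOpen A ∧ ∀ χ ∈ A, ∀ hc : χ.toFun ⟨star s * s, idem_star_mul s⟩ = true,
        Quot.mk (germRel (S := S)) ⟨(s, χ), hc⟩ ∈ U),
      ({sigmaMk s} : Set (SigmaQuot S)) ×ˢ
        (A ∩ {χ : SemiChar (Idem S) | χ.toFun ⟨star s * s, idem_star_mul s⟩ = true}), ?_, ?_⟩
  · refine isOpen_iUnion fun s => isOpen_iUnion fun A => isOpen_iUnion fun h => ?_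
    exact (isOpen_discrete _).prod (h.1.inter (isOpen_toFun_true _))
  · ext x
    obtain ⟨p, rfl⟩ := Quot.exists_rep x
    erw [Set.mem_preimage]
    simp only [Set.mem_iUnion, Set.mem_prod, Set.mem_singleton_iff,
      Set.mem_inter_iff, Set.mem_setOf_eq]
    constructor
    · rintro ⟨s, A, ⟨hA, hAU⟩, hq1, hq2, hc⟩
      have hU2 : Quot.mk (germRel (S := S)) ⟨(s, p.1.2), hc⟩ ∈ U := hAU p.1.2 hq2 hc
      have heq : Quot.mk (germRel (S := S)) p
          = Quot.mk (germRel (S := S)) (⟨(s, p.1.2), hc⟩ : Omega S) :=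
        Quot.sound (germRel_of hE (sigmaEq_of_mk_eq hq1) rfl)
      exact heq ▸ hU2
    · intro hxU
      have hop : IsOpen ((Quot.mk (germRel (S := S))) ⁻¹' U) :=
        isQuotientMap_quot_mk.isOpen_preimage.mpr hU
      obtain ⟨O, hO, hOW⟩ := isOpen_induced_iff.mp hop
      have hmem : (p.1 : S × SemiChar (Idem S)) ∈ O := by
        exact (Set.ext_iff.mp hOW p).mpr hxU
      obtain ⟨O1, O2, h1, h2, hm1, hm2, hsub⟩ := isOpen_prod_iff.mp hO p.1.1 p.1.2 hmem
      refine ⟨p.1.1, O2, ⟨h2, fun χ hχ hc => ?_⟩, rfl, hm2, p.2⟩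
      have hin : ((p.1.1, χ) : S × SemiChar (Idem S)) ∈ O := hsub ⟨hm1, hχ⟩
      have : (⟨(p.1.1, χ), hc⟩ : Omega S) ∈ Subtype.val ⁻¹' O := hin
      exact (Set.ext_iff.mp hOW _).mp this
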